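/- For all A > 0, f(A) ≥ f^{RAR}(A), i.e., the blood flow area function is pointwise bounded below by its two-rarefaction approximation. Consequently the two-rarefaction root A_{*rr} is an upper bound for the exact root A_* of f. -/
import Mathlib


/-- Blood flow wave-curve branch function for a state with area `AK`:
rarefaction branch for `A < AK`, shock branch for `A ≥ AK`; here the wave
speed is `c(A) = √(3γ/2) A^{1/4}`. -/
noncomputable def bfeBranch (γ AK A : ℝ) : ℝ :=
  if A < AK then
    4 * (Real.sqrt (3 * γ / 2) * A ^ ((1 : ℝ) / 4)
          - Real.sqrt (3 * γ / 2) * AK ^ ((1 : ℝ) / 4))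
  else
    Real.sqrt (γ * (A - AK) * (A ^ ((3 : ℝ) / 2) - AK ^ ((3 : ℝ) / 2)) / (A * AK))

lemma bfe_fourth_root_pow4 (A : ℝ) (hA : 0 < A) : (A ^ ((1:ℝ)/4)) ^ (4:ℕ) = A := by
  rw [← Real.rpow_natCast (A ^ ((1:ℝ)/4)) 4, ← Real.rpow_mul hA.le]
  norm_num

lemma bfe_fourth_root_pow6 (A : ℝ) (hA : 0 < A) : (A ^ ((1:ℝ)/4)) ^ (6:ℕ) = A ^ ((3:ℝ)/2) := by
  rw [← Real.rpow_natCast (A ^ ((1:ℝ)/4)) 6, ← Real.rpow_mul hA.le]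
  norm_num

lemma bfe_poly_ineq (a b : ℝ) (ha : 0 < a) (hb : 0 < b) (hab : b ≤ a) :
    24 * (a - b)^2 * (a^4 * b^4) ≤ (a^4 - b^4) * (a^6 - b^6) := by
  have h1 : 4*(a*b) ≤ (a+b)^2 := by nlinarith [sq_nonneg (a-b)]
  have h2 : 2*(a*b) ≤ a^2+b^2 := by nlinarith [sq_nonneg (a-b)]
  have h3 : 3*(a^2*b^2) ≤ a^4+a^2*b^2+b^4 := by nlinarith [sq_nonneg (a^2-b^2)]
  have hab0 : 0 < a*b := mul_pos ha hb
  have c1 : (2*(a*b))*(3*(a^2*b^2)) ≤ (a^2+b^2)*(a^4+a^2*b^2+b^4) := by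
    apply mul_le_mul h2 h3 (by positivity) (by nlinarith)
  have c2 : (4*(a*b))*((2*(a*b))*(3*(a^2*b^2))) ≤ (a+b)^2*((a^2+b^2)*(a^4+a^2*b^2+b^4)) := by
    apply mul_le_mul h1 c1 (by positivity) (by positivity)
  have c3 := mul_le_mul_of_nonneg_left c2 (sq_nonneg (a-b))
  nlinarith [c3]

lemma bfe_branch_ge (γ AK A : ℝ) (hγ : 0 < γ) (hAK : 0 < AK) (hA : 0 < A) :
    bfeBranch γ AK A ≥
      4 * (Real.sqrt (3 * γ / 2) * A ^ ((1 : ℝ) / 4)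
        - Real.sqrt (3 * γ / 2) * AK ^ ((1 : ℝ) / 4)) := by
  unfold bfeBranch
  split_ifs with h
  · exact le_refl _
  · push_neg at h
    set s := Real.sqrt (3 * γ / 2) with hs
    set a := A ^ ((1:ℝ)/4) with hadef
    set b := AK ^ ((1:ℝ)/4) with hbdef
    have ha : 0 < a := Real.rpow_pos_of_pos hA _
    have hb : 0 < b := Real.rpow_pos_of_pos hAK _
    have hab : b ≤ a := Real.rpow_le_rpow hAK.le h (by norm_num)
    have hA4 : A = a ^ (4:ℕ) := (bfe_fourth_root_pow4 A hA).symm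
    have hAK4 : AK = b ^ (4:ℕ) := (bfe_fourth_root_pow4 AK hAK).symm
    have hA6 : A ^ ((3:ℝ)/2) = a ^ (6:ℕ) := (bfe_fourth_root_pow6 A hA).symm
    have hAK6 : AK ^ ((3:ℝ)/2) = b ^ (6:ℕ) := (bfe_fourth_root_pow6 AK hAK).symm
    have hs2 : s ^ 2 = 3 * γ / 2 := Real.sq_sqrt (by positivity)
    have hsnn : 0 ≤ s := Real.sqrt_nonneg _
    rw [ge_iff_le, hA6, hAK6]
    rw [hA4, hAK4]
    have h4 : (0:ℝ) ≤ a^(4:ℕ) - b^(4:ℕ) := by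
      have := pow_le_pow_left₀ hb.le hab 4; linarith
    have h6 : (0:ℝ) ≤ a^(6:ℕ) - b^(6:ℕ) := by
      have := pow_le_pow_left₀ hb.le hab 6; linarith
    have hd : (0:ℝ) < a^(4:ℕ) * b^(4:ℕ) := by positivity
    have hinner : 0 ≤ γ * (a^(4:ℕ) - b^(4:ℕ)) * (a^(6:ℕ) - b^(6:ℕ)) / (a^(4:ℕ) * b^(4:ℕ)) :=
      div_nonneg (mul_nonneg (mul_nonneg hγ.le h4) h6) hd.le
    have hxnn : 0 ≤ 4 * (s * a - s * b) := by nlinarith [mul_le_mul_of_nonneg_left hab hsnn]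
    rw [Real.le_sqrt hxnn hinner, le_div_iff₀ hd]
    have hp := bfe_poly_ineq a b ha hb hab
    have hsq : (4 * (s * a - s * b)) ^ 2 = 24 * γ * (a - b) ^ 2 := by
      have h16 : (4 * (s * a - s * b)) ^ 2 = 16 * s ^ 2 * (a - b) ^ 2 := by ring
      rw [h16, hs2]; ring
    rw [hsq]
    nlinarith [mul_le_mul_of_nonneg_left hp hγ.le]

/-- The blood flow area function `f` is pointwise bounded below by its
two-rarefaction approximation `f^RAR`; consequently the two-rarefaction root
`A_{*rr}` is an upper bound for the exact root `A_*` of `f`. -/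
theorem bfe_area_function_ge_two_rarefaction (γ AL AR uL uR : ℝ)
    (hγ : 0 < γ) (hAL : 0 < AL) (hAR : 0 < AR) :
    (∀ A : ℝ, 0 < A →
      bfeBranch γ AL A + bfeBranch γ AR A + (uR - uL) ≥
        4 * (Real.sqrt (3 * γ / 2) * A ^ ((1 : ℝ) / 4)
              - Real.sqrt (3 * γ / 2) * AL ^ ((1 : ℝ) / 4))
          + 4 * (Real.sqrt (3 * γ / 2) * A ^ ((1 : ℝ) / 4)
              - Real.sqrt (3 * γ / 2) * AR ^ ((1 : ℝ) / 4)) + (uR - uL)) ∧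
    (∀ Astar Arr : ℝ, 0 < Astar → 0 < Arr →
      bfeBranch γ AL Astar + bfeBranch γ AR Astar + (uR - uL) = 0 →
      4 * (Real.sqrt (3 * γ / 2) * Arr ^ ((1 : ℝ) / 4)
            - Real.sqrt (3 * γ / 2) * AL ^ ((1 : ℝ) / 4))
        + 4 * (Real.sqrt (3 * γ / 2) * Arr ^ ((1 : ℝ) / 4)
            - Real.sqrt (3 * γ / 2) * AR ^ ((1 : ℝ) / 4)) + (uR - uL) = 0 →
      Astar ≤ Arr) := by
  have hpt : ∀ A : ℝ, 0 < A →
      bfeBranch γ AL A + bfeBranch γ AR A + (uR - uL) ≥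
        4 * (Real.sqrt (3 * γ / 2) * A ^ ((1 : ℝ) / 4)
              - Real.sqrt (3 * γ / 2) * AL ^ ((1 : ℝ) / 4))
          + 4 * (Real.sqrt (3 * γ / 2) * A ^ ((1 : ℝ) / 4)
              - Real.sqrt (3 * γ / 2) * AR ^ ((1 : ℝ) / 4)) + (uR - uL) := by
    intro A hA
    have h1 := bfe_branch_ge γ AL A hγ hAL hA
    have h2 := bfe_branch_ge γ AR A hγ hAR hA
    linarith
  refine ⟨hpt, ?_⟩
  intro Astar Arr hAs hArr hf hfrr
  by_contra hcon
  push_neg at hcon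
  have hlt : Arr ^ ((1:ℝ)/4) < Astar ^ ((1:ℝ)/4) :=
    Real.rpow_lt_rpow hArr.le hcon (by norm_num)
  have hspos : 0 < Real.sqrt (3 * γ / 2) := Real.sqrt_pos.mpr (by positivity)
  have := hpt Astar hAs
  nlinarith [this, mul_lt_mul_of_pos_left hlt hspos]
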